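/- Let A be a real symmetric positive semidefinite n×n matrix such that I − A is positive definite. Then ‖√(I − A) − I + ½A‖_F ≤ ½ ‖A‖_F². -/

import Mathlib

open Matrix

/-- The Frobenius norm `‖A‖_F = √(tr (Aᵀ A))` of a real square matrix. -/
noncomputable def frobeniusNorm {n : ℕ} (A : Matrix (Fin n) (Fin n) ℝ) : ℝ :=
  Real.sqrt ((Aᵀ * A).trace)

/-- The positive semidefinite square root of a positive semidefinite matrix
(the definition `Matrix.PosSemidef.sqrt` of the older Mathlib, since removed). -/
noncomputable def Matrix.PosSemidef.sqrt {n 𝕜 : Type*} [Fintype n] [RCLike 𝕜] [PartialOrder 𝕜] [StarOrderedRing 𝕜]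
    [DecidableEq n]
    {A : Matrix n n 𝕜} (hA : A.PosSemidef) : Matrix n n 𝕜 :=
  hA.1.eigenvectorUnitary.1 * diagonal ((↑) ∘ (√·) ∘ hA.1.eigenvalues) *
  (star hA.1.eigenvectorUnitary : Matrix n n 𝕜)

lemma frob_conj {n : ℕ} (U : Matrix (Fin n) (Fin n) ℝ) (hU : Uᵀ * U = 1) (hU' : U * Uᵀ = 1)
    (d : Fin n → ℝ) :
    frobeniusNorm (U * diagonal d * Uᵀ) = Real.sqrt (∑ i, d i ^ 2) := by
  unfold frobeniusNorm
  congr 1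
  have h0 : (U * diagonal d * Uᵀ)ᵀ = U * diagonal d * Uᵀ := by
    simp [transpose_mul, diagonal_transpose, Matrix.mul_assoc]
  rw [h0]
  have h1 : (U * diagonal d * Uᵀ) * (U * diagonal d * Uᵀ)
      = U * (diagonal d * diagonal d) * Uᵀ := by
    simp only [Matrix.mul_assoc]
    rw [← Matrix.mul_assoc Uᵀ U, hU, Matrix.one_mul]
  rw [h1]
  rw [Matrix.trace_mul_cycle, ← Matrix.mul_assoc, hU, Matrix.one_mul,
    diagonal_mul_diagonal, trace_diagonal]
  exact Finset.sum_congr rfl fun i _ => (sq (d i)).symm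

lemma scalar_ineq {x : ℝ} (hx0 : 0 ≤ x) (hx1 : x ≤ 1) :
    (Real.sqrt (1 - x) - 1 + x / 2) ^ 2 ≤ x ^ 4 / 4 := by
  set s := Real.sqrt (1 - x) with hs
  have hs0 : 0 ≤ s := Real.sqrt_nonneg _
  have hs2 : s ^ 2 = 1 - x := Real.sq_sqrt (by linarith)
  have hx : x = 1 - s ^ 2 := by linarith
  have h1 : s - 1 + x / 2 = -((1 - s) ^ 2) / 2 := by rw [hx]; ring
  have h2 : (1 : ℝ) ≤ (1 + s) ^ 4 := by nlinarith
  have ha : (0 : ℝ) ≤ (1 - s) ^ 4 := by positivity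
  have h3 := le_mul_of_one_le_right ha h2
  calc (s - 1 + x / 2) ^ 2 = (1 - s) ^ 4 / 4 := by rw [h1]; ring
    _ ≤ (1 - s) ^ 4 * (1 + s) ^ 4 / 4 := by linarith
    _ = x ^ 4 / 4 := by rw [hx]; ring

/-- If `A` is real symmetric positive semidefinite and `I - A` is
positive definite, then `‖√(I - A) - I + ½ A‖_F ≤ ½ ‖A‖_F²`. -/
theorem stmt3 {n : ℕ} (A : Matrix (Fin n) (Fin n) ℝ)
    (hA : A.PosSemidef) (hpd : (1 - A).PosDef) :
    frobeniusNorm (hpd.posSemidef.sqrt - 1 + (1 / 2 : ℝ) • A)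
      ≤ (1 / 2 : ℝ) * (frobeniusNorm A) ^ 2 := by
  classical
  have hH : A.IsHermitian := hA.1
  set U : Matrix (Fin n) (Fin n) ℝ := (hH.eigenvectorUnitary : Matrix (Fin n) (Fin n) ℝ) with hUdef
  set lam : Fin n → ℝ := hH.eigenvalues with hlamdef
  have hstar : star (U : Matrix (Fin n) (Fin n) ℝ) = Uᵀ := by
    rw [star_eq_conjTranspose, conjTranspose_eq_transpose_of_trivial]
  have hUU : Uᵀ * U = 1 := by
    rw [← hstar]; exact (Matrix.mem_unitaryGroup_iff').mp hH.eigenvectorUnitary.2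
  have hUU' : U * Uᵀ = 1 := by
    rw [← hstar]; exact (Matrix.mem_unitaryGroup_iff).mp hH.eigenvectorUnitary.2
  have hAspec : A = U * diagonal lam * Uᵀ := by
    have := hH.spectral_theorem
    rw [this, Unitary.conjStarAlgAut_apply]
    rfl
  -- eigenvalues bounds
  have hnn : ∀ i, 0 ≤ lam i := fun i => hA.eigenvalues_nonneg i
  have hlt : ∀ i, lam i < 1 := by
    intro i
    have hv := hH.mulVec_eigenvectorBasis i
    set v : Fin n → ℝ := ⇑(hH.eigenvectorBasis i) with hvdef
    have hv0 : v ≠ 0 := by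
      intro h
      exact hH.eigenvectorBasis.orthonormal.ne_zero i (by ext j; exact congrFun h j)
    have hpos := hpd.dotProduct_mulVec_pos hv0
    have hstarv : star v = v := by funext j; simp
    have hmv : (1 - A) *ᵥ v = v - lam i • v := by
      rw [sub_mulVec, one_mulVec, hv]
    rw [hstarv, hmv] at hpos
    have hdp : v ⬝ᵥ (v - lam i • v) = (1 - lam i) * (v ⬝ᵥ v) := by
      simp only [dotProduct_sub, dotProduct_smul, smul_eq_mul]; ring
    rw [hdp] at hpos
    have hvv : 0 ≤ v ⬝ᵥ v := by
      simpa using dotProduct_self_star_nonneg v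
    nlinarith
  -- the square root
  have hsqrt : hpd.posSemidef.sqrt = U * diagonal (fun i => Real.sqrt (1 - lam i)) * Uᵀ := by
    have hsa : IsSelfAdjoint A := hH
    have h1A : cfc (fun x : ℝ => 1 - x) A = 1 - A := by
      rw [cfc_sub (a := A) (f := fun _ => (1 : ℝ)) (g := fun x => x), cfc_const (1 : ℝ) A,
        cfc_id' ℝ A, map_one]
    rw [show hpd.posSemidef.sqrt = hpd.posSemidef.1.cfc Real.sqrt from rfl,
      ← Matrix.IsHermitian.cfc_eq, ← h1A]
    erw [← cfc_comp Real.sqrt (fun x => 1 - x) A]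
    rw [      Matrix.IsHermitian.cfc_eq hH, Matrix.IsHermitian.cfc, Unitary.conjStarAlgAut_apply]
    rfl
  -- the matrix in question
  have hM : hpd.posSemidef.sqrt - 1 + (1 / 2 : ℝ) • A
      = U * diagonal (fun i => Real.sqrt (1 - lam i) - 1 + lam i / 2) * Uᵀ := by
    have hd : diagonal (fun i => Real.sqrt (1 - lam i) - 1 + lam i / 2)
        = diagonal (fun i => Real.sqrt (1 - lam i)) - 1 + (1 / 2 : ℝ) • diagonal lam := by
      ext i j
      by_cases h : i = j
      · subst h
        simp only [diagonal_apply_eq, Matrix.add_apply, Matrix.sub_apply, Matrix.smul_apply,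
          Matrix.one_apply_eq, smul_eq_mul]
        ring
      · simp [diagonal_apply_ne _ h, Matrix.one_apply_ne h]
    rw [hd, Matrix.mul_add, Matrix.add_mul, Matrix.mul_sub, Matrix.sub_mul, Matrix.mul_one, hUU',
      hsqrt, hAspec, Matrix.mul_smul, Matrix.smul_mul]
  rw [hM, hAspec, frob_conj U hUU hUU', frob_conj U hUU hUU']
  -- now a real-number inequality
  have hsum2 : 0 ≤ ∑ i, lam i ^ 2 := Finset.sum_nonneg fun i _ => sq_nonneg _
  rw [Real.sq_sqrt hsum2]
  have key : ∑ i, (Real.sqrt (1 - lam i) - 1 + lam i / 2) ^ 2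
      ≤ ((1 / 2 : ℝ) * ∑ i, lam i ^ 2) ^ 2 := by
    have h1 : ∑ i, (Real.sqrt (1 - lam i) - 1 + lam i / 2) ^ 2
        ≤ ∑ i, (lam i ^ 2) ^ 2 / 4 := by
      apply Finset.sum_le_sum
      intro i _
      have := scalar_ineq (hnn i) (le_of_lt (hlt i))
      calc (Real.sqrt (1 - lam i) - 1 + lam i / 2) ^ 2 ≤ lam i ^ 4 / 4 := this
        _ = (lam i ^ 2) ^ 2 / 4 := by ring
    have h2 : ∑ i, (lam i ^ 2) ^ 2 / 4 ≤ ((1 / 2 : ℝ) * ∑ i, lam i ^ 2) ^ 2 := by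
      have h3 : ∑ i, (lam i ^ 2) ^ 2 ≤ (∑ i, lam i ^ 2) ^ 2 := by
        rw [sq (∑ i, lam i ^ 2), Finset.sum_mul]
        apply Finset.sum_le_sum
        intro i _
        rw [sq ((lam i) ^ 2)]
        apply mul_le_mul_of_nonneg_left _ (sq_nonneg _)
        exact Finset.single_le_sum (fun j _ => sq_nonneg (lam j)) (Finset.mem_univ i)
      calc ∑ i, (lam i ^ 2) ^ 2 / 4 = (∑ i, (lam i ^ 2) ^ 2) / 4 := by
            rw [Finset.sum_div]
        _ ≤ (∑ i, lam i ^ 2) ^ 2 / 4 := by linarith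
        _ = ((1 / 2 : ℝ) * ∑ i, lam i ^ 2) ^ 2 := by ring
    linarith
  calc Real.sqrt (∑ i, (Real.sqrt (1 - lam i) - 1 + lam i / 2) ^ 2)
      ≤ Real.sqrt (((1 / 2 : ℝ) * ∑ i, lam i ^ 2) ^ 2) := Real.sqrt_le_sqrt key
    _ = (1 / 2 : ℝ) * ∑ i, lam i ^ 2 := Real.sqrt_sq (by linarith)
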